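/- Let A = (a_{ij}) be an n×n stochastic matrix (entrywise nonnegative with every row sum equal to 1) such that for each column j, the column sum x_j and the smallest column entry a_j satisfy x_j ≤ 1 + n·a_j. Then B = A − J_n·A + J_n is the unique closest doubly stochastic matrix to A with respect to the Frobenius norm: B is doubly stochastic, and for every doubly stochastic n×n matrix C, ‖A − B‖_F ≤ ‖A − C‖_F with equality only if C = B. -/

import Mathlib

/-- The matrix `J_n`: every entry equal to `1/n`. -/
noncomputable def Jmat (n : ℕ) : Matrix (Fin n) (Fin n) ℝ :=
  Matrix.of fun _ _ => (1 : ℝ) / n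

/-- The Frobenius norm `‖M‖_F = sqrt (Σ_{i,j} m_{ij}²)`. -/
noncomputable def frobNorm {n : ℕ} (M : Matrix (Fin n) (Fin n) ℝ) : ℝ :=
  Real.sqrt (∑ i, ∑ j, (M i j) ^ 2)

/-- Let `A` be an `n × n` stochastic matrix such that each column sum `x_j` and smallest
column entry `a_j = ⨅ i, a_{ij}` satisfy `x_j ≤ 1 + n·a_j`.  Then
`B = A - J_n·A + J_n` is doubly stochastic and is the unique closest doubly stochastic
matrix to `A` with respect to the Frobenius norm. -/
theorem stmt10 (n : ℕ) (A : Matrix (Fin n) (Fin n) ℝ)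
    (hA : ∀ i j, 0 ≤ A i j) (hrow : ∀ i, ∑ j, A i j = 1)
    (hcond : ∀ j, ∑ i, A i j ≤ 1 + n * ⨅ i, A i j)
    (B : Matrix (Fin n) (Fin n) ℝ) (hB : B = A - Jmat n * A + Jmat n) :
    (∀ i j, 0 ≤ B i j) ∧
    (∀ i, ∑ j, B i j = 1) ∧
    (∀ j, ∑ i, B i j = 1) ∧
    (∀ C : Matrix (Fin n) (Fin n) ℝ,
      (∀ i j, 0 ≤ C i j) → (∀ i, ∑ j, C i j = 1) → (∀ j, ∑ i, C i j = 1) →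
      frobNorm (A - B) ≤ frobNorm (A - C) ∧
      (frobNorm (A - B) = frobNorm (A - C) → C = B)) := by
  have hBij : ∀ i j, B i j = A i j + (1 - ∑ k, A k j) / n := by
    intro i j
    have hn : (n : ℝ) ≠ 0 := Nat.cast_ne_zero.mpr i.pos.ne'
    simp only [hB, Matrix.add_apply, Matrix.sub_apply, Matrix.mul_apply, Jmat, Matrix.of_apply]
    rw [Finset.sum_congr rfl (fun k _ => one_div_mul_eq_div (n:ℝ) (A k j)),
      ← Finset.sum_div]
    field_simp
    ring
  -- nonnegativity
  have hBnn : ∀ i j, 0 ≤ B i j := by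
    intro i j
    have hn : (0:ℝ) < n := Nat.cast_pos.mpr i.pos
    have hbdd : BddBelow (Set.range fun i => A i j) := Finite.bddBelow_range _
    have h1 : (⨅ i, A i j) ≤ A i j := ciInf_le hbdd i
    have h2 : ∑ k, A k j ≤ 1 + n * A i j :=
      (hcond j).trans (by nlinarith)
    rw [hBij i j]
    have h3 : -(A i j) ≤ (1 - ∑ k, A k j) / n := by
      rw [le_div_iff₀ hn]; nlinarith
    linarith
  -- row sums
  have hBrow : ∀ i, ∑ j, B i j = 1 := by
    intro i
    have hn : (n : ℝ) ≠ 0 := Nat.cast_ne_zero.mpr i.pos.ne'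
    have hcol : ∑ j, ∑ k, A k j = n := by
      rw [Finset.sum_comm]
      simp [hrow]
    calc ∑ j, B i j = ∑ j, (A i j + (1 - ∑ k, A k j) / n) := by
          exact Finset.sum_congr rfl fun j _ => hBij i j
      _ = (∑ j, A i j) + ((∑ j, (1:ℝ)) - ∑ j, ∑ k, A k j) / n := by
          rw [Finset.sum_add_distrib, ← Finset.sum_div, Finset.sum_sub_distrib]
      _ = 1 := by
          rw [hrow i, hcol]
          simp
  -- column sums
  have hBcol : ∀ j, ∑ i, B i j = 1 := by
    intro j
    rcases Nat.eq_zero_or_pos n with h0 | hpos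
    · subst h0; exact j.elim0
    have hn : (n : ℝ) ≠ 0 := Nat.cast_ne_zero.mpr hpos.ne'
    calc ∑ i, B i j = ∑ i : Fin n, (A i j + (1 - ∑ k, A k j) / n) := by
          exact Finset.sum_congr rfl fun i _ => hBij i j
      _ = (∑ i, A i j) + n * ((1 - ∑ k, A k j) / n) := by
          rw [Finset.sum_add_distrib, Finset.sum_const, Finset.card_univ, Fintype.card_fin,
            nsmul_eq_mul]
      _ = 1 := by field_simp; ring
  refine ⟨hBnn, hBrow, hBcol, ?_⟩
  intro C hC hCrow hCcol
  -- A - B is constant along columns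
  have hABij : ∀ i j, (A - B) i j = -((1 - ∑ k, A k j) / n) := by
    intro i j
    simp [Matrix.sub_apply, hBij i j]
  -- cross term vanishes
  have cross : ∑ i, ∑ j, (A - B) i j * (B - C) i j = 0 := by
    rw [Finset.sum_comm]
    apply Finset.sum_eq_zero
    intro j _
    calc ∑ i, (A - B) i j * (B - C) i j
        = -((1 - ∑ k, A k j) / n) * ∑ i, (B - C) i j := by
          rw [Finset.mul_sum]
          exact Finset.sum_congr rfl fun i _ => by rw [hABij i j]
      _ = 0 := by
          have : ∑ i, (B - C) i j = 0 := by
            simp only [Matrix.sub_apply, Finset.sum_sub_distrib, hBcol j, hCcol j, sub_self]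
          rw [this, mul_zero]
  -- Pythagorean identity
  have pyth : ∑ i, ∑ j, ((A - C) i j) ^ 2
      = (∑ i, ∑ j, ((A - B) i j) ^ 2) + ∑ i, ∑ j, ((B - C) i j) ^ 2 := by
    have expand : ∀ i j, ((A - C) i j) ^ 2
        = ((A - B) i j) ^ 2 + 2 * ((A - B) i j * (B - C) i j) + ((B - C) i j) ^ 2 := by
      intro i j
      simp only [Matrix.sub_apply]
      ring
    calc ∑ i, ∑ j, ((A - C) i j) ^ 2
        = ∑ i, ∑ j, (((A - B) i j) ^ 2 + 2 * ((A - B) i j * (B - C) i j)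
            + ((B - C) i j) ^ 2) := by
          exact Finset.sum_congr rfl fun i _ => Finset.sum_congr rfl fun j _ => expand i j
      _ = (∑ i, ∑ j, ((A - B) i j) ^ 2)
            + 2 * (∑ i, ∑ j, (A - B) i j * (B - C) i j)
            + ∑ i, ∑ j, ((B - C) i j) ^ 2 := by
          simp only [Finset.sum_add_distrib, ← Finset.mul_sum]
      _ = _ := by rw [cross]; ring
  have hBCnn : 0 ≤ ∑ i, ∑ j, ((B - C) i j) ^ 2 :=
    Finset.sum_nonneg fun i _ => Finset.sum_nonneg fun j _ => sq_nonneg _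
  have hABnn : 0 ≤ ∑ i, ∑ j, ((A - B) i j) ^ 2 :=
    Finset.sum_nonneg fun i _ => Finset.sum_nonneg fun j _ => sq_nonneg _
  constructor
  · exact Real.sqrt_le_sqrt (by linarith)
  · intro heq
    have hsum : ∑ i, ∑ j, ((A - B) i j) ^ 2 = ∑ i, ∑ j, ((A - C) i j) ^ 2 := by
      have h1 := Real.sq_sqrt hABnn
      have h2 := Real.sq_sqrt (by linarith : (0:ℝ) ≤ ∑ i, ∑ j, ((A - C) i j) ^ 2)
      rw [← h1, ← h2]
      unfold frobNorm at heq
      rw [heq]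
    have hzero : ∑ i, ∑ j, ((B - C) i j) ^ 2 = 0 := by linarith
    ext i j
    have h1 : ∀ i ∈ Finset.univ, ∑ j, ((B - C) i j) ^ 2 = 0 := by
      intro i _
      have := (Finset.sum_eq_zero_iff_of_nonneg
        (fun i _ => Finset.sum_nonneg fun j _ => sq_nonneg ((B - C) i j))).mp hzero
      exact this i (Finset.mem_univ i)
    have h2 : ((B - C) i j) ^ 2 = 0 := by
      have := (Finset.sum_eq_zero_iff_of_nonneg
        (fun j _ => sq_nonneg ((B - C) i j))).mp (h1 i (Finset.mem_univ i))
      exact this j (Finset.mem_univ j)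
    have := pow_eq_zero_iff (n := 2) (by norm_num) |>.mp h2
    simp only [Matrix.sub_apply] at this
    linarith
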